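/- (Bahadur–Rao for Poisson) Let α > 0 be such that a centered unit Poisson variable takes value α with positive probability (i.e., α ∈ ℕ in the shifted lattice, equivalently 1 + α ∈ ℕ, 1 + α ≥ 1). Then lim_{N→∞, N ∈ ℕ} P(Po(N) − N ≥ α·N) · exp(N·I(α)) · √N = √(1+α)/(α·√(2π)), where I(α) = (1+α)·ln(1+α) − α. -/

import Mathlib

open ProbabilityTheory
open scoped NNReal

noncomputable def I (α : ℝ) : ℝ := (1 + α) * Real.log (1 + α) - α

namespace BRPoisson

open Filter Real

/-- `kk m N = N (1+m)`, the tail threshold. -/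
def kk (m N : ℕ) : ℕ := N + m * N

/-- `aa m N i = N^i (kk)!/(kk+i)!`, the ratio of the `(kk+i)`-th Poisson term to the first. -/
noncomputable def aa (m N i : ℕ) : ℝ := (N : ℝ) ^ i * (kk m N).factorial / ((kk m N + i).factorial)

lemma kk_cast (m N : ℕ) : ((kk m N : ℕ) : ℝ) = (1 + m) * N := by
  unfold kk; push_cast; ring

lemma aa_zero (m N : ℕ) : aa m N 0 = 1 := by
  have h1 : ((kk m N).factorial : ℝ) ≠ 0 := by exact_mod_cast (kk m N).factorial_ne_zero
  simp [aa, div_self h1]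

lemma aa_succ (m N i : ℕ) :
    aa m N (i + 1) = aa m N i * ((N : ℝ) / (kk m N + i + 1)) := by
  unfold aa
  rw [show kk m N + (i + 1) = (kk m N + i) + 1 by ring, Nat.factorial_succ]
  have h1 : ((kk m N + i).factorial : ℝ) ≠ 0 := by exact_mod_cast (kk m N + i).factorial_ne_zero
  have h2 : ((kk m N + i : ℕ) : ℝ) + 1 ≠ 0 := by positivity
  push_cast
  rw [pow_succ]
  field_simp

lemma aa_nonneg (m N i : ℕ) : 0 ≤ aa m N i := by
  unfold aa; positivity

lemma aa_le (m N i : ℕ) (hm : 1 ≤ m) : aa m N i ≤ (((1 : ℝ) + m)⁻¹) ^ i := by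
  induction i with
  | zero => simp [aa_zero]
  | succ i ih =>
    rw [aa_succ, pow_succ]
    have hpos : (0:ℝ) < (kk m N : ℝ) + i + 1 := by positivity
    have hc : (0:ℝ) < 1 + (m:ℝ) := by positivity
    have hratio : (N : ℝ) / ((kk m N : ℝ) + i + 1) ≤ ((1:ℝ) + m)⁻¹ := by
      rw [div_le_iff₀ hpos, inv_mul_eq_div, le_div_iff₀ hc]
      have : ((1:ℝ) + m) * N = (kk m N : ℝ) := (kk_cast m N).symm
      nlinarith [this, (by positivity : (0:ℝ) ≤ (i:ℝ))]
    exact mul_le_mul ih hratio (by positivity) (by positivity)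

lemma aa_tendsto (m i : ℕ) (hm : 1 ≤ m) :
    Tendsto (fun N => aa m N i) atTop (nhds ((((1:ℝ) + m)⁻¹) ^ i)) := by
  induction i with
  | zero =>
    simp only [aa_zero, pow_zero]
    exact tendsto_const_nhds
  | succ i ih =>
    have hc : (0:ℝ) < 1 + (m:ℝ) := by positivity
    have hratio : Tendsto (fun N : ℕ => (N : ℝ) / ((kk m N : ℝ) + i + 1)) atTop
        (nhds (((1:ℝ) + m)⁻¹)) := by
      have h1 : Tendsto (fun N : ℕ => ((1:ℝ) + m) + ((i:ℝ) + 1) / N) atTop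
          (nhds ((1:ℝ) + m)) := by
        have := (tendsto_const_div_atTop_nhds_zero_nat ((i:ℝ) + 1)).const_add ((1:ℝ) + m)
        simpa using this
      have h2 := h1.inv₀ (ne_of_gt hc)
      refine h2.congr' ?_
      filter_upwards [eventually_ge_atTop 1] with N hN
      have hN0 : (N : ℝ) ≠ 0 := by positivity
      have hkc : ((kk m N : ℕ) : ℝ) = (1 + m) * N := kk_cast m N
      have hN0' : (0:ℝ) < (N:ℝ) := by exact_mod_cast hN
      rw [hkc, show (1:ℝ) + m + ((i:ℝ)+1)/N = (((1:ℝ)+m)*N + i + 1)/N by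
        field_simp; ring, inv_div]
    have := ih.mul hratio
    rw [← pow_succ] at this
    refine this.congr ?_
    intro N
    rw [aa_succ]

/-- Pull the first term out of the tail sum of ratios. -/
lemma poisson_term_eq (m N i : ℕ) :
    poissonPMFReal (N : ℝ≥0) (kk m N + i) = poissonPMFReal (N : ℝ≥0) (kk m N) * aa m N i := by
  unfold poissonPMFReal aa
  have h1 : ((kk m N).factorial : ℝ) ≠ 0 := by exact_mod_cast (kk m N).factorial_ne_zero
  have h2 : ((kk m N + i).factorial : ℝ) ≠ 0 := by exact_mod_cast (kk m N + i).factorial_ne_zero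
  have hcast : ((N : ℝ≥0) : ℝ) = (N : ℝ) := by norm_num
  rw [hcast, pow_add]
  field_simp

end BRPoisson

open BRPoisson Filter Real

/-- Bahadur–Rao exact asymptotics for the Poisson upper tail:
`P(Po(N) - N ≥ αN) · e^{N I(α)} · √N → √(1+α)/(α√(2π))`. -/
theorem bahadur_rao_poisson (α : ℝ) (hα : 0 < α) (hlat : ∃ m : ℕ, (m : ℝ) = α) :
    Filter.Tendsto
      (fun N : ℕ =>
        (∑' j : {j : ℕ // (N : ℝ) + α * N ≤ (j : ℝ)}, poissonPMFReal (N : ℝ≥0) j) *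
          Real.exp (N * I α) * Real.sqrt N)
      Filter.atTop
      (nhds (Real.sqrt (1 + α) / (α * Real.sqrt (2 * Real.pi)))) := by
  obtain ⟨m, rfl⟩ := hlat
  have hm : 1 ≤ m := by exact_mod_cast Nat.one_le_cast.mpr (Nat.pos_of_ne_zero (by
    rintro rfl; simp at hα))
  have hm1 : (1:ℝ) ≤ (m:ℝ) := by exact_mod_cast hm
  have hc : (0:ℝ) < 1 + (m:ℝ) := by positivity
  -- Step 1: rewrite the tail sum
  have hsum_eq : ∀ N : ℕ,
      (∑' j : {j : ℕ // (N : ℝ) + (m:ℝ) * N ≤ (j : ℝ)}, poissonPMFReal (N : ℝ≥0) j)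
        = poissonPMFReal (N : ℝ≥0) (kk m N) * ∑' i : ℕ, aa m N i := by
    intro N
    have hiff : ∀ j : ℕ, ((N : ℝ) + (m:ℝ) * N ≤ (j : ℝ)) ↔ kk m N ≤ j := by
      intro j
      rw [show ((N:ℝ) + (m:ℝ)*N) = ((kk m N : ℕ) : ℝ) by rw [kk_cast]; ring, Nat.cast_le]
    let e : ℕ ≃ {j : ℕ // (N : ℝ) + (m:ℝ) * N ≤ (j : ℝ)} :=
      { toFun := fun i => ⟨kk m N + i, (hiff _).2 (Nat.le_add_right _ _)⟩
        invFun := fun j => j.1 - kk m N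
        left_inv := fun i => by simp
        right_inv := fun j => by
          apply Subtype.ext
          exact Nat.add_sub_cancel' ((hiff _).1 j.2) }
    rw [← e.tsum_eq (fun j => poissonPMFReal (N : ℝ≥0) j.1)]
    simp only [e, Equiv.coe_fn_mk]
    rw [← tsum_mul_left]
    exact tsum_congr fun i => poisson_term_eq m N i
  -- Step 2: the geometric factor
  have hA : Tendsto (fun N : ℕ => ∑' i : ℕ, aa m N i) atTop
      (nhds ((1 + (m:ℝ)) / m)) := by
    have hr0 : (0:ℝ) ≤ (1 + (m:ℝ))⁻¹ := by positivity
    have hr1 : (1 + (m:ℝ))⁻¹ < 1 := by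
      rw [inv_lt_one_iff₀]; right; linarith
    have hgeom : ∑' i : ℕ, ((1 + (m:ℝ))⁻¹) ^ i = (1 + (m:ℝ)) / m := by
      rw [tsum_geometric_of_lt_one hr0 hr1]
      have hm0 : (0:ℝ) < (m:ℝ) := by linarith
      rw [show (1:ℝ) - (1+(m:ℝ))⁻¹ = (m:ℝ)/(1+(m:ℝ)) by field_simp; ring, inv_div]
    rw [← hgeom]
    refine tendsto_tsum_of_dominated_convergence (summable_geometric_of_lt_one hr0 hr1)
      (fun i => aa_tendsto m i hm) ?_
    filter_upwards with N i
    rw [Real.norm_eq_abs, abs_of_nonneg (aa_nonneg m N i)]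
    exact aa_le m N i hm
  -- Step 3: the leading term via Stirling
  have hkey : ∀ N : ℕ, 1 ≤ N →
      poissonPMFReal (N : ℝ≥0) (kk m N) * Real.exp (N * I m) * Real.sqrt N
        = (Stirling.stirlingSeq (kk m N))⁻¹ * (Real.sqrt (2 * (1 + m)))⁻¹ := by
    intro N hN
    have hN0 : (0:ℝ) < N := by exact_mod_cast hN
    have hk1 : 1 ≤ kk m N := by unfold kk; omega
    have hkc : ((kk m N : ℕ) : ℝ) = (1 + m) * N := kk_cast m N
    have hkpos : (0:ℝ) < (kk m N : ℝ) := by rw [hkc]; positivity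
    have hfac : (0:ℝ) < ((kk m N).factorial : ℝ) := by exact_mod_cast (kk m N).factorial_pos
    -- exponential identity
    have hexp : Real.exp (-(N:ℝ)) * Real.exp ((N:ℝ) * I m) * Real.exp (kk m N)
        = (1 + (m:ℝ)) ^ (kk m N) := by
      rw [← Real.exp_add, ← Real.exp_add]
      rw [show ((1:ℝ) + m) ^ (kk m N) = Real.exp ((kk m N) * Real.log (1 + m)) by
        rw [Real.exp_nat_mul, Real.exp_log hc]]
      rw [Real.exp_eq_exp, hkc]
      unfold I; ring
    -- power decomposition
    have hpow : ((kk m N : ℝ) / Real.exp 1) ^ (kk m N)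
        = (1 + (m:ℝ)) ^ (kk m N) * (N:ℝ) ^ (kk m N) / Real.exp (kk m N) := by
      rw [div_pow, hkc, mul_pow]
      congr 1
      rw [← Real.exp_nat_mul, mul_one, hkc]
    -- sqrt decomposition
    have hsqrt : Real.sqrt (2 * (kk m N : ℝ)) = Real.sqrt (2 * (1 + m)) * Real.sqrt N := by
      rw [hkc, show (2:ℝ) * ((1 + (m:ℝ)) * N) = (2 * (1 + m)) * N by ring,
        Real.sqrt_mul (by positivity)]
    unfold Stirling.stirlingSeq poissonPMFReal
    rw [hpow, hsqrt]
    have hcast : ((N : ℝ≥0) : ℝ) = (N : ℝ) := by norm_num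
    rw [hcast]
    have hsq2c : (0:ℝ) < Real.sqrt (2 * (1 + m)) := Real.sqrt_pos.mpr (by positivity)
    have hsqN : (0:ℝ) < Real.sqrt N := Real.sqrt_pos.mpr hN0
    have hexpk : (0:ℝ) < Real.exp (kk m N) := Real.exp_pos _
    have hNpow : (0:ℝ) < (N:ℝ) ^ (kk m N) := by positivity
    have hcpow : (0:ℝ) < (1 + (m:ℝ)) ^ (kk m N) := by positivity
    rw [← hexp]
    field_simp
  -- Step 3': tendsto of the leading term
  have hkk_atTop : Tendsto (fun N : ℕ => kk m N) atTop atTop := by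
    exact tendsto_atTop_mono (fun N => Nat.le_add_right N (m*N)) tendsto_id
  have hstir : Tendsto (fun N : ℕ => Stirling.stirlingSeq (kk m N)) atTop
      (nhds (Real.sqrt Real.pi)) :=
    Stirling.tendsto_stirlingSeq_sqrt_pi.comp hkk_atTop
  have hpi : Real.sqrt Real.pi ≠ 0 := ne_of_gt (Real.sqrt_pos.mpr Real.pi_pos)
  have hlead : Tendsto
      (fun N : ℕ => poissonPMFReal (N : ℝ≥0) (kk m N) * Real.exp (N * I m) * Real.sqrt N)
      atTop (nhds ((Real.sqrt Real.pi)⁻¹ * (Real.sqrt (2 * (1 + m)))⁻¹)) := by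
    refine Tendsto.congr' ?_ ((hstir.inv₀ hpi).mul tendsto_const_nhds)
    filter_upwards [eventually_ge_atTop 1] with N hN
    exact (hkey N hN).symm
  -- Assemble
  have hmain := hlead.mul hA
  have hval : (Real.sqrt Real.pi)⁻¹ * (Real.sqrt (2 * (1 + m)))⁻¹ * ((1 + (m:ℝ)) / m)
      = Real.sqrt (1 + (m:ℝ)) / ((m:ℝ) * Real.sqrt (2 * Real.pi)) := by
    rw [Real.sqrt_mul (by norm_num : (0:ℝ) ≤ 2) ((1:ℝ) + m),
      Real.sqrt_mul (by norm_num : (0:ℝ) ≤ 2) Real.pi]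
    have h2 : (0:ℝ) < Real.sqrt 2 := Real.sqrt_pos.mpr (by norm_num)
    have hcs : (0:ℝ) < Real.sqrt (1 + (m:ℝ)) := Real.sqrt_pos.mpr hc
    have hps : (0:ℝ) < Real.sqrt Real.pi := Real.sqrt_pos.mpr Real.pi_pos
    have hm0 : (0:ℝ) < (m:ℝ) := by linarith
    have hself : Real.sqrt (1 + (m:ℝ)) * Real.sqrt (1 + (m:ℝ)) = 1 + (m:ℝ) :=
      Real.mul_self_sqrt (le_of_lt hc)
    field_simp
    linear_combination (-1:ℝ) * hself
  rw [hval] at hmain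
  refine hmain.congr ?_
  intro N
  rw [hsum_eq N]
  ring
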